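/- Let k be a natural number and N : Fin k → ℕ with N i ≥ 1 for all i, and let G = Π i, ZMod (N i). Then the |G|×|G| complex matrix M indexed by G with entries M_{a,y} = (Π i, cas(2π·(a i).val·(y i).val/(N i))) / √|G| is a member of the unitary group. -/

import Mathlib

/-- The `cas` function: `cas x = cos x + sin x`. -/
noncomputable def cas (x : ℝ) : ℝ := Real.cos x + Real.sin x

open Finset

lemma sum_exp_zmod (N : ℕ) [NeZero N] (m : ℤ) :
    ∑ y : ZMod N, Complex.exp (((2 * Real.pi * m * (y.val : ℝ) / N : ℝ)) * Complex.I)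
      = if (N : ℤ) ∣ m then (N : ℂ) else 0 := by
  have hNC : (N : ℂ) ≠ 0 := Nat.cast_ne_zero.mpr (NeZero.ne N)
  have hsum : ∑ y : ZMod N, Complex.exp (((2 * Real.pi * m * (y.val : ℝ) / N : ℝ)) * Complex.I)
      = ∑ j ∈ range N, Complex.exp (((2 * Real.pi * m * (j : ℝ) / N : ℝ)) * Complex.I) :=
    Finset.sum_nbij' (fun y => y.val) (fun j => (j : ZMod N))
      (fun y _ => Finset.mem_range.mpr (ZMod.val_lt y))
      (fun j _ => Finset.mem_univ _)
      (fun y _ => ZMod.natCast_rightInverse y)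
      (fun j hj => ZMod.val_cast_of_lt (Finset.mem_range.mp hj))
      (fun y _ => rfl)
  rw [hsum]
  set r : ℂ := Complex.exp (((2 * Real.pi * m / N : ℝ)) * Complex.I) with hr
  have hterm : ∀ j : ℕ, Complex.exp (((2 * Real.pi * m * (j : ℝ) / N : ℝ)) * Complex.I) = r ^ j := by
    intro j
    rw [hr, ← Complex.exp_nat_mul]
    congr 1
    push_cast
    field_simp
  simp only [hterm]
  have hrN : r ^ N = 1 := by
    rw [hr, ← Complex.exp_nat_mul]
    have : (N : ℂ) * ((((2 * Real.pi * m / N : ℝ))) * Complex.I) = (m : ℂ) * (2 * Real.pi * Complex.I) := by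
      push_cast
      field_simp
    rw [this, Complex.exp_int_mul_two_pi_mul_I]
  by_cases hdvd : (N : ℤ) ∣ m
  · obtain ⟨c, rfl⟩ := hdvd
    have hc : r = 1 := by
      rw [hr]
      have : (((2 * Real.pi * ((N : ℤ) * c : ℤ) / N : ℝ)) : ℂ) * Complex.I
          = (c : ℂ) * (2 * Real.pi * Complex.I) := by
        push_cast
        field_simp
      rw [this, Complex.exp_int_mul_two_pi_mul_I]
    simp [hc, if_pos (Dvd.intro c rfl)]
  · rw [if_neg hdvd]
    have hr1 : r ≠ 1 := by
      intro h
      rw [hr, Complex.exp_eq_one_iff] at h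
      obtain ⟨n, hn⟩ := h
      apply hdvd
      have h2pi : (2 * (Real.pi : ℂ) * Complex.I) ≠ 0 := by
        simp [Complex.I_ne_zero, Real.pi_ne_zero, Complex.ofReal_ne_zero]
      have hn' : ((m : ℂ) / N) * (2 * Real.pi * Complex.I) = (n : ℂ) * (2 * Real.pi * Complex.I) := by
        push_cast at hn ⊢
        linear_combination hn
      have h3 : ((m : ℂ) / N) = (n : ℂ) := mul_right_cancel₀ h2pi hn'
      have h4 : (m : ℂ) = (n : ℂ) * N := by
        field_simp at h3
        linear_combination h3
      exact Dvd.intro_left n (by exact_mod_cast h4.symm)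
    rw [geom_sum_eq hr1, hrN]
    simp

lemma sum_cos_zmod (N : ℕ) [NeZero N] (m : ℤ) :
    ∑ y : ZMod N, Real.cos (2 * Real.pi * m * (y.val : ℝ) / N)
      = if (N : ℤ) ∣ m then (N : ℝ) else 0 := by
  have h := congrArg Complex.re (sum_exp_zmod N m)
  rw [Complex.re_sum] at h
  simp only [Complex.exp_ofReal_mul_I_re, apply_ite Complex.re, Complex.natCast_re,
    Complex.zero_re] at h
  exact h

lemma sum_sin_zmod (N : ℕ) [NeZero N] (m : ℤ) :
    ∑ y : ZMod N, Real.sin (2 * Real.pi * m * (y.val : ℝ) / N) = 0 := by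
  have h := congrArg Complex.im (sum_exp_zmod N m)
  rw [Complex.im_sum] at h
  simp only [Complex.exp_ofReal_mul_I_im, apply_ite Complex.im, Complex.natCast_im,
    Complex.zero_im] at h
  simpa using h

lemma sum_cas_mul_cas (N : ℕ) [NeZero N] (a b : ZMod N) :
    ∑ y : ZMod N, cas (2 * Real.pi * (a.val : ℝ) * (y.val : ℝ) / N) *
        cas (2 * Real.pi * (b.val : ℝ) * (y.val : ℝ) / N)
      = if a = b then (N : ℝ) else 0 := by
  have hNR : (N : ℝ) ≠ 0 := Nat.cast_ne_zero.mpr (NeZero.ne N)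
  have hprod : ∀ y : ZMod N,
      cas (2 * Real.pi * (a.val : ℝ) * (y.val : ℝ) / N) *
        cas (2 * Real.pi * (b.val : ℝ) * (y.val : ℝ) / N)
      = Real.cos (2 * Real.pi * (((a.val : ℤ) - (b.val : ℤ) : ℤ) : ℝ) * (y.val : ℝ) / N)
        + Real.sin (2 * Real.pi * (((a.val : ℤ) + (b.val : ℤ) : ℤ) : ℝ) * (y.val : ℝ) / N) := by
    intro y
    set u := 2 * Real.pi * (a.val : ℝ) * (y.val : ℝ) / N with hu
    set v := 2 * Real.pi * (b.val : ℝ) * (y.val : ℝ) / N with hv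
    have h1 : 2 * Real.pi * (((a.val : ℤ) - (b.val : ℤ) : ℤ) : ℝ) * (y.val : ℝ) / N = u - v := by
      rw [hu, hv]; push_cast; ring
    have h2 : 2 * Real.pi * (((a.val : ℤ) + (b.val : ℤ) : ℤ) : ℝ) * (y.val : ℝ) / N = u + v := by
      rw [hu, hv]; push_cast; ring
    rw [h1, h2, Real.cos_sub, Real.sin_add]
    unfold cas
    ring
  rw [Finset.sum_congr rfl (fun y _ => hprod y), Finset.sum_add_distrib,
    sum_cos_zmod, sum_sin_zmod, add_zero]
  congr 1
  rw [← ZMod.intCast_zmod_eq_zero_iff_dvd]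
  push_cast
  rw [ZMod.natCast_val, ZMod.natCast_val, ZMod.cast_id, ZMod.cast_id, sub_eq_zero]


/-- The multiplicative Hartley transform over `G = Π i, ZMod (N i)` is unitary. -/
theorem multiplicativeHartley_mem_unitaryGroup (k : ℕ) (N : Fin k → ℕ)
    [∀ i, NeZero (N i)] :
    (fun a y : (∀ i, ZMod (N i)) =>
        (((∏ i, cas (2 * Real.pi * (a i).val * (y i).val / (N i))) /
            Real.sqrt (Fintype.card (∀ i, ZMod (N i))) : ℝ) : ℂ)) ∈
      Matrix.unitaryGroup (∀ i, ZMod (N i)) ℂ := by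
  set G := ∀ i, ZMod (N i) with hG
  set A : Matrix G G ℂ := fun a y =>
      (((∏ i, cas (2 * Real.pi * (a i).val * (y i).val / (N i))) /
          Real.sqrt (Fintype.card G) : ℝ) : ℂ) with hA
  have hcard : (Fintype.card G : ℝ) = ∏ i, (N i : ℝ) := by
    rw [show Fintype.card G = ∏ i, N i by rw [Fintype.card_pi]; exact Finset.prod_congr rfl fun i _ => ZMod.card (N i)]
    push_cast
    rfl
  have hcard0 : (0 : ℝ) < (Fintype.card G : ℝ) := by exact_mod_cast Fintype.card_pos
  have hP_symm : ∀ x y : G, (∏ i, cas (2 * Real.pi * ((x i).val : ℝ) * ((y i).val : ℝ) / (N i)))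
      = ∏ i, cas (2 * Real.pi * ((y i).val : ℝ) * ((x i).val : ℝ) / (N i)) :=
    fun x y => Finset.prod_congr rfl fun i _ => congrArg cas (by ring)
  have hA_symm : ∀ x y : G, A x y = A y x := by
    intro x y
    simp only [hA]
    rw [hP_symm]
  have hstar : star A = A := by
    ext x y
    rw [Matrix.star_apply, hA_symm y x]
    simp only [hA]
    exact Complex.conj_ofReal _
  change A ∈ Matrix.unitaryGroup G ℂ
  rw [Matrix.mem_unitaryGroup_iff, hstar]
  ext a b
  rw [Matrix.mul_apply, Matrix.one_apply]
  have hterm : ∀ y : G, A a y * A y b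
      = ((((∏ i, cas (2 * Real.pi * ((a i).val : ℝ) * ((y i).val : ℝ) / (N i))) *
          (∏ i, cas (2 * Real.pi * ((b i).val : ℝ) * ((y i).val : ℝ) / (N i)))) /
          (Real.sqrt (Fintype.card G) * Real.sqrt (Fintype.card G)) : ℝ) : ℂ) := by
    intro y
    rw [hA_symm y b]
    simp only [hA]
    rw [← Complex.ofReal_mul]
    congr 1
    rw [div_mul_div_comm]
  rw [Finset.sum_congr rfl fun y _ => hterm y, ← Complex.ofReal_sum, ← Finset.sum_div]
  have key : ∑ y : G, (∏ i, cas (2 * Real.pi * ((a i).val : ℝ) * ((y i).val : ℝ) / N i)) *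
      (∏ i, cas (2 * Real.pi * ((b i).val : ℝ) * ((y i).val : ℝ) / N i))
      = if a = b then (Fintype.card G : ℝ) else 0 := by
    have h1 : ∀ y : G, (∏ i, cas (2 * Real.pi * ((a i).val : ℝ) * ((y i).val : ℝ) / N i)) *
        (∏ i, cas (2 * Real.pi * ((b i).val : ℝ) * ((y i).val : ℝ) / N i))
        = ∏ i, (cas (2 * Real.pi * ((a i).val : ℝ) * ((y i).val : ℝ) / N i) *
            cas (2 * Real.pi * ((b i).val : ℝ) * ((y i).val : ℝ) / N i)) := fun y =>
      (Finset.prod_mul_distrib).symm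
    rw [Finset.sum_congr rfl fun y _ => h1 y]
    rw [show (Finset.univ : Finset G) = Fintype.piFinset (fun i => (Finset.univ : Finset (ZMod (N i)))) from (Fintype.piFinset_univ).symm]
    rw [← Finset.prod_univ_sum (fun i : Fin k => (Finset.univ : Finset (ZMod (N i))))
      (fun i c => cas (2 * Real.pi * ((a i).val : ℝ) * ((c).val : ℝ) / N i) *
        cas (2 * Real.pi * ((b i).val : ℝ) * ((c).val : ℝ) / N i))]
    have h2 : ∀ i : Fin k, ∑ c : ZMod (N i),
        cas (2 * Real.pi * ((a i).val : ℝ) * ((c).val : ℝ) / N i) *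
          cas (2 * Real.pi * ((b i).val : ℝ) * ((c).val : ℝ) / N i)
        = if a i = b i then (N i : ℝ) else 0 := fun i => sum_cas_mul_cas (N i) (a i) (b i)
    rw [Finset.prod_congr rfl fun i _ => h2 i]
    by_cases hab : a = b
    · subst hab
      simp [hcard]
    · obtain ⟨i, hi⟩ : ∃ i, a i ≠ b i := by
        by_contra h
        push_neg at h
        exact hab (funext h)
      rw [if_neg hab]
      exact Finset.prod_eq_zero (Finset.mem_univ i) (if_neg hi)
  rw [key, Real.mul_self_sqrt hcard0.le]
  by_cases hab : a = b
  · rw [if_pos hab, if_pos hab, div_self hcard0.ne']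
    norm_num
  · rw [if_neg hab, if_neg hab, zero_div]
    norm_num
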